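/- arXiv:2101.06877 — 5 statements merged into one kernel-verified Lean document; each statement's English description precedes it below -/
import Mathlib

section
/- Every strongly Deza graph has at most five distinct eigenvalues. -/
open scoped Classical

noncomputable section

namespace DezaPaper

open SimpleGraph

variable {V : Type*}

/-- `G` is `k`-regular: every vertex has exactly `k` neighbours. -/
def IsRegular (G : SimpleGraph V) (k : ℕ) : Prop :=
  ∀ v, Nat.card (G.neighborSet v) = k

/-- `G` is a Deza graph with parameters `(n, k, b, a)`:  a `k`-regular graph on `n`
vertices, not complete and not edgeless, in which every pair of distinct vertices has
`b` or `a` common neighbours, where `a ≤ b`. -/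
def IsDezaWith (G : SimpleGraph V) (n k b a : ℕ) : Prop :=
  Nat.card V = n ∧ IsRegular G k ∧ a ≤ b ∧ G ≠ ⊤ ∧ G ≠ ⊥ ∧
    ∀ u v : V, u ≠ v →
      Nat.card (G.commonNeighbors u v) = b ∨ Nat.card (G.commonNeighbors u v) = a

/-- The child of `G` associated with the value `c`: two distinct vertices are adjacent
iff they have exactly `c` common neighbours in `G`.  (For a Deza graph with parameters
`(n,k,b,a)`, `child G a` is the child `G_A` and `child G b` is the child `G_B`.) -/
def child (G : SimpleGraph V) (c : ℕ) : SimpleGraph V where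
  Adj u v := u ≠ v ∧ Nat.card (G.commonNeighbors u v) = c
  symm := ⟨by
    rintro u v ⟨h1, h2⟩
    refine ⟨h1.symm, ?_⟩
    rwa [SimpleGraph.commonNeighbors_symm]⟩
  loopless := ⟨fun v h => h.1 rfl⟩

/-- `G` is a strongly regular graph with parameters `(n, k, l, m)`:  a `k`-regular
graph on `n` vertices, not complete and not edgeless, any two adjacent vertices have
`l` common neighbours and any two distinct non-adjacent vertices have `m` common
neighbours. -/
def IsSRGraphWith (G : SimpleGraph V) (n k l m : ℕ) : Prop :=
  Nat.card V = n ∧ IsRegular G k ∧ G ≠ ⊤ ∧ G ≠ ⊥ ∧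
    (∀ u v, G.Adj u v → Nat.card (G.commonNeighbors u v) = l) ∧
    (∀ u v, u ≠ v → ¬G.Adj u v → Nat.card (G.commonNeighbors u v) = m)

/-- `G` is a strongly Deza graph with parameters `(n, k, b, a)`: a Deza graph with
`b > a` whose two children are strongly regular graphs. -/
def IsStronglyDezaWith (G : SimpleGraph V) (n k b a : ℕ) : Prop :=
  IsDezaWith G n k b a ∧ a < b ∧
    (∃ k' l' m', IsSRGraphWith (child G a) n k' l' m') ∧
    (∃ k' l' m', IsSRGraphWith (child G b) n k' l' m')

/-- The real adjacency matrix of `G`. -/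
def adjMat [Fintype V] [DecidableEq V] (G : SimpleGraph V) : Matrix V V ℝ :=
  Matrix.of fun u v => if G.Adj u v then (1 : ℝ) else 0

/-- The spectrum of `G`: the multiset of real eigenvalues (with multiplicity) of its
real adjacency matrix, i.e. the roots of its characteristic polynomial. -/
def spectrum [Fintype V] [DecidableEq V] (G : SimpleGraph V) : Multiset ℝ :=
  (adjMat G).charpoly.roots

/-- `G` is integral: all its eigenvalues are integers. -/
def IsIntegral [Fintype V] [DecidableEq V] (G : SimpleGraph V) : Prop :=
  ∀ θ ∈ spectrum G, ∃ t : ℤ, θ = (t : ℝ)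

/-- `G` is bipartite. -/
def IsBipartiteGraph (G : SimpleGraph V) : Prop :=
  ∃ s : Set V, ∀ u v, G.Adj u v → (u ∈ s ↔ v ∉ s)

/-- The distance-`i` graph of `G`: two vertices are adjacent iff they are at
distance `i` in `G`. -/
def distGraph (G : SimpleGraph V) (i : ℕ) : SimpleGraph V where
  Adj u v := u ≠ v ∧ G.dist u v = i
  symm := ⟨by
    rintro u v ⟨h1, h2⟩
    exact ⟨h1.symm, by rwa [SimpleGraph.dist_comm]⟩⟩
  loopless := ⟨fun v h => h.1 rfl⟩

/-- `G` is a distance-regular graph of diameter `d` with intersection numbers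
`ia i`, `ib i`, `ic i`. -/
def IsDRGWith (G : SimpleGraph V) (d : ℕ) (ia ib ic : ℕ → ℕ) : Prop :=
  G.Connected ∧ (∃ u v : V, G.dist u v = d) ∧ (∀ u v : V, G.dist u v ≤ d) ∧
    ∀ i ≤ d, ∀ u v : V, G.dist u v = i →
      Nat.card {w : V | G.Adj v w ∧ G.dist u w = i + 1} = ib i ∧
      Nat.card {w : V | G.Adj v w ∧ G.dist u w = i} = ia i ∧
      (1 ≤ i → Nat.card {w : V | G.Adj v w ∧ G.dist u w = i - 1} = ic i)

/-- The complete multipartite graph with `t` parts of size `m`. -/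
def completeMultipartite (t m : ℕ) : SimpleGraph (Fin t × Fin m) where
  Adj u v := u.1 ≠ v.1
  symm := ⟨fun _ _ h => h.symm⟩
  loopless := ⟨fun _ h => h rfl⟩

/-- `H` is a complete multipartite graph with parts of equal size. -/
def IsCompleteMultipartiteEq (H : SimpleGraph V) : Prop :=
  ∃ t m : ℕ, Nonempty (H ≃g completeMultipartite t m)

/-- `G` is a divisible design graph with parameters `(n, k, b, a)`: a Deza graph whose
children are a complete multipartite graph with parts of equal size and its
complement. -/
def IsDDGWith (G : SimpleGraph V) (n k b a : ℕ) : Prop :=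
  IsDezaWith G n k b a ∧ a < b ∧
    ((IsCompleteMultipartiteEq (child G a) ∧ child G b = (child G a)ᶜ) ∨
     (IsCompleteMultipartiteEq (child G b) ∧ child G a = (child G b)ᶜ))

set_option linter.unusedSectionVars false

section Aux

variable [Fintype V] [DecidableEq V]

lemma adjMat_apply (H : SimpleGraph V) (u v : V) :
    adjMat H u v = if H.Adj u v then (1:ℝ) else 0 := rfl

lemma card_commonNeighbors_eq (H : SimpleGraph V) (u v : V) :
    (Nat.card (H.commonNeighbors u v)) =
      (Finset.univ.filter (fun w => H.Adj u w ∧ H.Adj v w)).card := by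
  rw [Nat.card_eq_fintype_card, ← Set.toFinset_card]
  congr 1
  ext w
  simp [SimpleGraph.mem_commonNeighbors]

lemma adjMat_mul_self_apply (H : SimpleGraph V) (u v : V) :
    (adjMat H * adjMat H) u v = (Nat.card (H.commonNeighbors u v) : ℝ) := by
  rw [Matrix.mul_apply, card_commonNeighbors_eq, Finset.card_filter]
  push_cast
  refine Finset.sum_congr rfl fun w _ => ?_
  by_cases h1 : H.Adj u w <;> by_cases h2 : H.Adj v w <;>
    simp [adjMat_apply, h1, h2, H.adj_comm]

lemma commonNeighbors_self (H : SimpleGraph V) (u : V) :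
    H.commonNeighbors u u = H.neighborSet u := Set.inter_self _

lemma sum_adjMat_row (H : SimpleGraph V) (u : V) :
    ∑ w, adjMat H u w = (Nat.card (H.neighborSet u) : ℝ) := by
  rw [Nat.card_eq_fintype_card, ← Set.toFinset_card]
  rw [show (H.neighborSet u).toFinset = Finset.univ.filter (fun w => H.Adj u w) by
    ext w; simp]
  rw [Finset.card_filter]
  push_cast
  refine Finset.sum_congr rfl fun w _ => ?_
  by_cases h1 : H.Adj u w <;> simp [adjMat_apply, h1]

lemma sum_adjMat_col (H : SimpleGraph V) (v : V) :
    ∑ w, adjMat H w v = (Nat.card (H.neighborSet v) : ℝ) := by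
  rw [← sum_adjMat_row H v]
  refine Finset.sum_congr rfl fun w _ => ?_
  simp [adjMat_apply, H.adj_comm]

def Jmat (V : Type*) [Fintype V] : Matrix V V ℝ := Matrix.of fun _ _ => 1

lemma Jmat_apply (u v : V) : Jmat V u v = 1 := rfl

lemma adjMat_mul_J {G : SimpleGraph V} {k : ℕ} (h : IsRegular G k) :
    adjMat G * Jmat V = (k:ℝ) • Jmat V := by
  ext u v
  rw [Matrix.mul_apply]
  simp only [Jmat_apply, mul_one, Matrix.smul_apply, smul_eq_mul]
  rw [sum_adjMat_row, h u]

lemma J_mul_adjMat {G : SimpleGraph V} {k : ℕ} (h : IsRegular G k) :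
    Jmat V * adjMat G = (k:ℝ) • Jmat V := by
  ext u v
  rw [Matrix.mul_apply]
  simp only [Jmat_apply, one_mul, mul_one, Matrix.smul_apply, smul_eq_mul]
  rw [sum_adjMat_col, h v]

lemma J_mul_J : (Jmat V) * Jmat V = (Fintype.card V : ℝ) • Jmat V := by
  ext u v
  simp [Matrix.mul_apply, Jmat_apply, Finset.card_univ]

lemma eval_eq_zero_of_charpoly_root {A : Matrix V V ℝ} {Q : Polynomial ℝ}
    (hQA : Polynomial.aeval A Q = 0) {θ : ℝ} (hθ : A.charpoly.IsRoot θ) :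
    Q.eval θ = 0 := by
  have hdet : (θ • (1 : Matrix V V ℝ) - A).det = 0 := by
    have h := hθ
    rw [Polynomial.IsRoot, Matrix.charpoly, eval_det,
      Matrix.matPolyEquiv_charmatrix] at h
    rw [show θ • (1 : Matrix V V ℝ) - A = Polynomial.eval (Matrix.scalar V θ)
        (Polynomial.X - Polynomial.C A) by
      simp [Matrix.scalar, Matrix.smul_one_eq_diagonal]]
    exact h
  obtain ⟨w, hw0, hw⟩ := Matrix.exists_mulVec_eq_zero_iff.mpr hdet
  have hAw : A.mulVec w = θ • w := by
    rw [Matrix.sub_mulVec, Matrix.smul_mulVec, Matrix.one_mulVec, sub_eq_zero] at hw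
    exact hw.symm
  have hpow : ∀ m : ℕ, (A ^ m).mulVec w = θ ^ m • w := by
    intro m
    induction m with
    | zero => simp [Matrix.one_mulVec]
    | succ m ih =>
      rw [pow_succ, ← Matrix.mulVec_mulVec, hAw, Matrix.mulVec_smul, ih, smul_smul,
        pow_succ, mul_comm]
  have haev : ∀ p : Polynomial ℝ, (Polynomial.aeval A p).mulVec w = p.eval θ • w := by
    intro p
    induction p using Polynomial.induction_on' with
    | add p q hp hq => simp [map_add, Matrix.add_mulVec, hp, hq, add_smul]
    | monomial m c =>
      rw [Polynomial.aeval_monomial, Polynomial.eval_monomial,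
        Algebra.algebraMap_eq_smul_one, smul_mul_assoc, one_mul,
        Matrix.smul_mulVec, hpow, smul_smul]
  have h0 : Q.eval θ • w = 0 := by
    rw [← haev, hQA, Matrix.zero_mulVec]
  rcases smul_eq_zero.mp h0 with h | h
  · exact h
  · exact absurd h hw0


lemma child_adj (G : SimpleGraph V) (c : ℕ) (u v : V) :
    (child G c).Adj u v ↔ u ≠ v ∧ Nat.card (G.commonNeighbors u v) = c := Iff.rfl


end Aux

/-- Every strongly Deza graph has at most five distinct eigenvalues. -/
theorem stronglyDeza_atMost_five_eigenvalues [Fintype V] [DecidableEq V]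
    (G : SimpleGraph V) (n k b a : ℕ) (hG : IsStronglyDezaWith G n k b a) :
    (spectrum G).toFinset.card ≤ 5 := by
  classical
  obtain ⟨⟨hn, hreg, -, -, -, hdeza⟩, hlt, -, ⟨kb, lb, mb, hnB, hregB, -, -, hadjB, hnadjB⟩⟩ := hG
  have hab : (a : ℕ) ≠ b := hlt.ne
  -- Matrix identities
  have h1 : adjMat G * adjMat G = ((k:ℝ)-(a:ℝ)) • (1 : Matrix V V ℝ)
      + (a:ℝ) • Jmat V + ((b:ℝ)-(a:ℝ)) • adjMat (child G b) := by
    ext u v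
    rw [adjMat_mul_self_apply]
    simp only [Matrix.add_apply, Matrix.smul_apply, Matrix.one_apply, Jmat_apply,
      adjMat_apply, child_adj, smul_eq_mul]
    by_cases huv : u = v
    · subst huv
      rw [commonNeighbors_self, hreg u]
      simp
    · rcases hdeza u v huv with hc | hc <;> rw [hc] <;> simp [huv, hab] <;> ring
  have h2 : adjMat (child G b) * adjMat (child G b)
      = ((kb:ℝ)-(mb:ℝ)) • (1 : Matrix V V ℝ)
        + ((lb:ℝ)-(mb:ℝ)) • adjMat (child G b) + (mb:ℝ) • Jmat V := by
    ext u v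
    rw [adjMat_mul_self_apply]
    simp only [Matrix.add_apply, Matrix.smul_apply, Matrix.one_apply, Jmat_apply,
      adjMat_apply, smul_eq_mul]
    by_cases huv : u = v
    · subst huv
      rw [commonNeighbors_self, hregB u]
      simp
    · by_cases hadj : (child G b).Adj u v
      · rw [hadjB u v hadj]; simp [huv, hadj]; try ring
      · rw [hnadjB u v huv hadj]; simp [huv, hadj]; try ring
  have h3 : adjMat G * Jmat V = (k:ℝ) • Jmat V := adjMat_mul_J hreg
  have h5 : (Jmat V) * Jmat V = (Fintype.card V : ℝ) • Jmat V := J_mul_J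
  have h6 : adjMat (child G b) * Jmat V = (kb:ℝ) • Jmat V := adjMat_mul_J hregB
  have h7 : Jmat V * adjMat (child G b) = (kb:ℝ) • Jmat V := J_mul_adjMat hregB
  have h1' : adjMat G * adjMat G - ((k:ℝ)-(a:ℝ)) • (1 : Matrix V V ℝ)
      = (a:ℝ) • Jmat V + ((b:ℝ)-(a:ℝ)) • adjMat (child G b) := by
    rw [h1]; abel
  have hT : (adjMat G * adjMat G - ((k:ℝ)-(a:ℝ)) • (1 : Matrix V V ℝ))
        * (adjMat G * adjMat G - ((k:ℝ)-(a:ℝ)) • (1 : Matrix V V ℝ))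
      - (((b:ℝ)-(a:ℝ))*((lb:ℝ)-(mb:ℝ)))
          • (adjMat G * adjMat G - ((k:ℝ)-(a:ℝ)) • (1 : Matrix V V ℝ))
      - (((b:ℝ)-(a:ℝ))^2*((kb:ℝ)-(mb:ℝ))) • (1 : Matrix V V ℝ)
      = ((a:ℝ)^2*(Fintype.card V : ℝ) + 2*(a:ℝ)*((b:ℝ)-(a:ℝ))*(kb:ℝ)
          + ((b:ℝ)-(a:ℝ))^2*(mb:ℝ)
          - ((b:ℝ)-(a:ℝ))*((lb:ℝ)-(mb:ℝ))*(a:ℝ)) • Jmat V := by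
    rw [h1']
    rw [Matrix.add_mul, Matrix.mul_add, Matrix.mul_add]
    simp only [smul_mul_assoc, mul_smul_comm, h5, h6, h7, h2, smul_add, smul_smul]
    module
  have hfinal : (adjMat G - (k:ℝ) • (1 : Matrix V V ℝ))
      * ((adjMat G * adjMat G - ((k:ℝ)-(a:ℝ)) • (1 : Matrix V V ℝ))
          * (adjMat G * adjMat G - ((k:ℝ)-(a:ℝ)) • (1 : Matrix V V ℝ))
        - (((b:ℝ)-(a:ℝ))*((lb:ℝ)-(mb:ℝ)))
            • (adjMat G * adjMat G - ((k:ℝ)-(a:ℝ)) • (1 : Matrix V V ℝ))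
        - (((b:ℝ)-(a:ℝ))^2*((kb:ℝ)-(mb:ℝ))) • (1 : Matrix V V ℝ)) = 0 := by
    rw [hT, Matrix.mul_smul, Matrix.sub_mul, h3, smul_mul_assoc, Matrix.one_mul,
      sub_self, smul_zero]
  obtain ⟨gr, hg⟩ : ∃ x : ℝ, x = (k:ℝ)-(a:ℝ) := ⟨_, rfl⟩
  obtain ⟨c1, hc1⟩ : ∃ x : ℝ, x = ((b:ℝ)-(a:ℝ))*((lb:ℝ)-(mb:ℝ)) := ⟨_, rfl⟩
  obtain ⟨c2, hc2⟩ : ∃ x : ℝ, x = ((b:ℝ)-(a:ℝ))^2*((kb:ℝ)-(mb:ℝ)) := ⟨_, rfl⟩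
  rw [← hg, ← hc1, ← hc2] at hfinal
  set Q : Polynomial ℝ :=
    (Polynomial.X - Polynomial.C (k:ℝ))
      * ((Polynomial.X^2 - Polynomial.C gr)^2
        - Polynomial.C c1 * (Polynomial.X^2 - Polynomial.C gr)
        - Polynomial.C c2) with hQdef
  have hQA : Polynomial.aeval (adjMat G) Q = 0 := by
    rw [hQdef]
    simp only [map_sub, map_mul, map_pow, Polynomial.aeval_X, Polynomial.aeval_C,
      Algebra.algebraMap_eq_smul_one, pow_two, smul_mul_assoc, one_mul]
    exact hfinal
  have hQdeg : Q.natDegree = 5 := by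
    rw [hQdef]; compute_degree!
  have hQne : Q ≠ 0 := by
    intro h
    rw [h] at hQdeg
    simp at hQdeg
  have key : ∀ θ ∈ DezaPaper.spectrum G, θ ∈ Q.roots := by
    intro θ hθ
    have hroot : (adjMat G).charpoly.IsRoot θ :=
      Polynomial.isRoot_of_mem_roots hθ
    exact Polynomial.mem_roots'.mpr ⟨hQne, eval_eq_zero_of_charpoly_root hQA hroot⟩
  calc (DezaPaper.spectrum G).toFinset.card
      ≤ Q.roots.toFinset.card := by
        apply Finset.card_le_card
        intro θ hθ
        rw [Multiset.mem_toFinset] at *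
        exact key θ hθ
    _ ≤ Multiset.card Q.roots := Q.roots.toFinset_card_le
    _ ≤ Q.natDegree := Q.card_roots'
    _ = 5 := hQdeg


end DezaPaper
end
end

section
/- If a strongly Deza graph G with parameters (n,k,b,a) has exactly two distinct eigenvalues, then a = 0, b = k − 1 ≥ 1, and G is a disjoint union of complete graphs on k + 1 vertices. -/
open scoped Classical

noncomputable section

namespace DezaPaper

open SimpleGraph

variable {V : Type*}

section Aux

variable [Fintype V] [DecidableEq V]

lemma adjMat_isHermitian (G : SimpleGraph V) : (adjMat G).IsHermitian := by
  ext i j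
  simp only [Matrix.conjTranspose_apply, adjMat, Matrix.of_apply, star_trivial]
  rw [SimpleGraph.adj_comm]

lemma charpoly_conj_aux {R : Type*} [CommRing R] {m : Type*} [Fintype m] [DecidableEq m]
    (M N D : Matrix m m R) (h : M * N = 1) :
    (M * D * N).charpoly = D.charpoly := by
  classical
  set f : Matrix m m R →+* Matrix m m (Polynomial R) := (Polynomial.C : R →+* Polynomial R).mapMatrix with hf
  have hMN : f M * f N = 1 := by rw [← map_mul, h, map_one]
  have key : Matrix.charmatrix (M * D * N) = f M * Matrix.charmatrix D * f N := by
    unfold Matrix.charmatrix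
    rw [Matrix.mul_sub, Matrix.sub_mul]
    congr 1
    · have hc : Commute (Matrix.scalar m (Polynomial.X : Polynomial R)) (f M) :=
        Matrix.scalar_commute _ (fun r' => Commute.all _ _) _
      symm
      calc f M * Matrix.scalar m (Polynomial.X : Polynomial R) * f N
          = Matrix.scalar m (Polynomial.X : Polynomial R) * (f M * f N) := by
            rw [← hc.eq, mul_assoc]
        _ = Matrix.scalar m (Polynomial.X : Polynomial R) := by rw [hMN, mul_one]
    · rw [map_mul, map_mul]
  unfold Matrix.charpoly
  rw [key, Matrix.det_mul, Matrix.det_mul]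
  have hdet : (f M).det * (f N).det = 1 := by rw [← Matrix.det_mul, hMN, Matrix.det_one]
  calc (f M).det * D.charmatrix.det * (f N).det
      = D.charmatrix.det * ((f M).det * (f N).det) := by ring
    _ = D.charmatrix.det := by rw [hdet, mul_one]

lemma charpoly_diagonal {R : Type*} [CommRing R] {m : Type*} [Fintype m] [DecidableEq m]
    (d : m → R) :
    (Matrix.diagonal d).charpoly = ∏ i, (Polynomial.X - Polynomial.C (d i)) := by
  have h : Matrix.charmatrix (Matrix.diagonal d) =
      Matrix.diagonal (fun i => Polynomial.X - Polynomial.C (d i)) := by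
    ext i j
    by_cases hij : i = j
    · subst hij; simp
    · simp [Matrix.charmatrix_apply_ne _ _ _ hij, Matrix.diagonal_apply_ne _ hij]
  rw [Matrix.charpoly, h, Matrix.det_diagonal]

lemma spectrum_eq (G : SimpleGraph V) :
    spectrum G = Finset.univ.val.map (adjMat_isHermitian G).eigenvalues := by
  have hA := adjMat_isHermitian G
  have hco : (RCLike.ofReal ∘ hA.eigenvalues : V → ℝ) = hA.eigenvalues := by
    funext i; simp [RCLike.ofReal_real_eq_id]
  have hUU : (hA.eigenvectorUnitary : Matrix V V ℝ) * star (hA.eigenvectorUnitary : Matrix V V ℝ)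
      = 1 := (Matrix.mem_unitaryGroup_iff).mp hA.eigenvectorUnitary.2
  have hcp : (adjMat G).charpoly = (Matrix.diagonal hA.eigenvalues).charpoly := by
    conv_lhs => rw [hA.spectral_theorem, hco]
    exact charpoly_conj_aux _ _ _ hUU
  rw [spectrum, hcp, charpoly_diagonal]
  have : (∏ i, (Polynomial.X - Polynomial.C (hA.eigenvalues i))) =
      ((Finset.univ.val.map hA.eigenvalues).map
        (fun r => Polynomial.X - Polynomial.C r)).prod := by
    rw [Multiset.map_map]; rfl
  rw [this, Polynomial.roots_multiset_prod_X_sub_C]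

lemma adjMat_sq_apply (G : SimpleGraph V) (u v : V) :
    (adjMat G * adjMat G) u v = (Nat.card (G.commonNeighbors u v) : ℝ) := by
  classical
  rw [Matrix.mul_apply]
  have h1 : ∀ w, adjMat G u w * adjMat G w v
      = if G.Adj u w ∧ G.Adj v w then (1 : ℝ) else 0 := by
    intro w
    have hwv : G.Adj w v ↔ G.Adj v w := G.adj_comm w v
    by_cases h1 : G.Adj u w <;> by_cases h2 : G.Adj v w <;>
      simp [adjMat, h1, h2, hwv]
  simp_rw [h1]
  rw [Finset.sum_boole]
  have h2 : G.commonNeighbors u v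
      = ↑(Finset.univ.filter fun w => G.Adj u w ∧ G.Adj v w) := by
    ext w
    simp [SimpleGraph.commonNeighbors, SimpleGraph.mem_neighborSet]
  rw [h2, Nat.card_coe_set_eq, Set.ncard_coe_finset]

lemma adjMat_quad (G : SimpleGraph V) (θ1 θ2 : ℝ)
    (hev : ∀ i, (adjMat_isHermitian G).eigenvalues i = θ1 ∨
      (adjMat_isHermitian G).eigenvalues i = θ2) :
    adjMat G * adjMat G = (θ1 + θ2) • adjMat G - (θ1 * θ2) • 1 := by
  have hA := adjMat_isHermitian G
  set U : Matrix V V ℝ := (hA.eigenvectorUnitary : Matrix V V ℝ) with hUdef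
  have hUU : U * star U = 1 := (Matrix.mem_unitaryGroup_iff).mp hA.eigenvectorUnitary.2
  have hsUU : star U * U = 1 := (Matrix.mem_unitaryGroup_iff').mp hA.eigenvectorUnitary.2
  have hco : (RCLike.ofReal ∘ hA.eigenvalues : V → ℝ) = hA.eigenvalues := by
    funext i; simp [RCLike.ofReal_real_eq_id]
  have hD : adjMat G = U * Matrix.diagonal hA.eigenvalues * star U := by
    have h := hA.spectral_theorem
    rw [hco] at h
    exact h
  have hsub : ∀ θ : ℝ, adjMat G - θ • 1
      = U * Matrix.diagonal (fun i => hA.eigenvalues i - θ) * star U := by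
    intro θ
    have h1 : (θ • (1 : Matrix V V ℝ)) = U * (θ • 1) * star U := by
      rw [mul_smul_comm, smul_mul_assoc, mul_one, hUU]
    conv_lhs => rw [hD, h1, ← Matrix.sub_mul, ← Matrix.mul_sub, Matrix.smul_one_eq_diagonal,
      Matrix.diagonal_sub]
  have key : (adjMat G - θ1 • 1) * (adjMat G - θ2 • 1) = 0 := by
    rw [hsub θ1, hsub θ2]
    have hmid : star U * (U * (Matrix.diagonal (fun i => hA.eigenvalues i - θ2) * star U))
        = Matrix.diagonal (fun i => hA.eigenvalues i - θ2) * star U := by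
      rw [← mul_assoc, hsUU, one_mul]
    have hDD : Matrix.diagonal (fun i => hA.eigenvalues i - θ1) *
        Matrix.diagonal (fun i => hA.eigenvalues i - θ2) = 0 := by
      rw [Matrix.diagonal_mul_diagonal]
      have : (fun i => (hA.eigenvalues i - θ1) * (hA.eigenvalues i - θ2)) = fun _ => (0 : ℝ) := by
        funext i
        rcases hev i with h | h <;> rw [h] <;> ring
      rw [this, Matrix.diagonal_zero]
    simp only [mul_assoc]
    rw [hmid, ← mul_assoc (Matrix.diagonal fun i => hA.eigenvalues i - θ1), hDD, Matrix.zero_mul,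
      Matrix.mul_zero]
  have hexp := key
  rw [sub_mul, mul_sub, mul_sub, smul_mul_assoc, mul_smul_comm, one_mul, mul_one] at hexp
  have h11 : (θ1 • (1 : Matrix V V ℝ)) * (θ2 • 1) = (θ1 * θ2) • 1 := by
    rw [smul_mul_assoc, one_mul, smul_smul]
  rw [h11, sub_sub, sub_eq_zero] at hexp
  rw [hexp, add_smul]
  abel

lemma exists_adj_of_ne_bot (H : SimpleGraph V) (h : H ≠ ⊥) : ∃ u v, H.Adj u v := by
  by_contra hc
  push_neg at hc
  exact h (by ext u v; simp [hc u v])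

end Aux

/-- If a strongly Deza graph `G` with parameters `(n,k,b,a)` has exactly
two distinct eigenvalues, then `a = 0`, `b = k - 1 ≥ 1`, and `G` is a disjoint union of
complete graphs on `k + 1` vertices. -/
theorem stronglyDeza_two_eigenvalues [Fintype V] [DecidableEq V]
    (G : SimpleGraph V) (n k b a : ℕ) (hG : IsStronglyDezaWith G n k b a)
    (h2 : (spectrum G).toFinset.card = 2) :
    a = 0 ∧ b = k - 1 ∧ 1 ≤ b ∧
      (∀ u v : V, G.Adj u v ↔ (u ≠ v ∧ G.Reachable u v)) ∧
      (∀ c : G.ConnectedComponent, Nat.card c.supp = k + 1) := by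
  classical
  obtain ⟨hDeza, hab, ⟨ka, la, ma, hSA⟩, ⟨kb, lb, mb, hSB⟩⟩ := hG
  obtain ⟨hn, hreg, hle, hnetop, hnebot, hcount⟩ := hDeza
  have hA := adjMat_isHermitian G
  -- extract the two eigenvalues
  obtain ⟨θ1, θ2, hθne, hθset⟩ := Finset.card_eq_two.mp h2
  have hev : ∀ i, hA.eigenvalues i = θ1 ∨ hA.eigenvalues i = θ2 := by
    intro i
    have hmem : hA.eigenvalues i ∈ spectrum G := by
      rw [spectrum_eq]
      exact Multiset.mem_map_of_mem _ (Finset.mem_univ i)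
    have h3 := Multiset.mem_toFinset.mpr hmem
    rw [hθset] at h3
    simpa using h3
  have hAA := adjMat_quad G θ1 θ2 hev
  -- non-adjacent distinct vertices have no common neighbours
  have hnonadj : ∀ u v, u ≠ v → ¬G.Adj u v → Nat.card (G.commonNeighbors u v) = 0 := by
    intro u v huv hnadj
    have h1 := adjMat_sq_apply G u v
    rw [hAA] at h1
    simp only [Matrix.sub_apply, Matrix.smul_apply, Matrix.one_apply_ne huv, adjMat,
      Matrix.of_apply, if_neg hnadj, smul_zero, sub_zero] at h1
    exact_mod_cast h1.symm
  -- reachable distinct vertices are adjacent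
  have hclique : ∀ u v : V, u ≠ v → G.Reachable u v → G.Adj u v := by
    intro u v huv hr
    obtain ⟨w⟩ := hr
    induction w with
    | nil => exact absurd rfl huv
    | @cons u x v h p ih =>
      by_cases hxv : x = v
      · subst hxv; exact h
      · have hxvadj : G.Adj x v := ih hxv
        by_contra hnadj
        have h0 := hnonadj u v huv hnadj
        have hxmem : x ∈ G.commonNeighbors u v := ⟨h, hxvadj.symm⟩
        haveI : Nonempty (G.commonNeighbors u v) := ⟨⟨x, hxmem⟩⟩
        have hpos : 0 < Nat.card (G.commonNeighbors u v) := Nat.card_pos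
        omega
  -- adjacent vertices have exactly k - 1 common neighbours, and k ≥ 1
  have hadjcount : ∀ u v, G.Adj u v →
      Nat.card (G.commonNeighbors u v) + 1 = k := by
    intro u v h
    have hins : G.neighborSet v = insert u (G.commonNeighbors u v) := by
      ext w
      simp only [SimpleGraph.mem_neighborSet, Set.mem_insert_iff,
        SimpleGraph.mem_commonNeighbors]
      constructor
      · intro hvw
        by_cases hwu : w = u
        · exact Or.inl hwu
        · refine Or.inr ⟨?_, hvw⟩
          exact hclique u w (fun hh => hwu hh.symm)
            ((h.reachable).trans hvw.reachable)
      · rintro (rfl | ⟨h1, h2⟩)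
        · exact h.symm
        · exact h2
    have hnm : u ∉ G.commonNeighbors u v := fun hc => G.loopless.irrefl u hc.1
    have hcard : (insert u (G.commonNeighbors u v)).ncard
        = (G.commonNeighbors u v).ncard + 1 :=
      Set.ncard_insert_of_notMem hnm (Set.toFinite _)
    have hk := hreg v
    rw [Nat.card_coe_set_eq, hins, hcard] at hk
    rw [Nat.card_coe_set_eq]
    exact hk
  -- every count is 0 or k - 1
  have hvals : ∀ u v : V, u ≠ v → Nat.card (G.commonNeighbors u v) = 0 ∨
      (Nat.card (G.commonNeighbors u v) + 1 = k) := by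
    intro u v huv
    by_cases hadj : G.Adj u v
    · exact Or.inr (hadjcount u v hadj)
    · exact Or.inl (hnonadj u v huv hadj)
  -- a is attained
  obtain ⟨ua, va, haadj⟩ := exists_adj_of_ne_bot _ hSA.2.2.2.1
  obtain ⟨hane, hacount⟩ : ua ≠ va ∧ _ := haadj
  -- b is attained
  obtain ⟨ub, vb, hbadj⟩ := exists_adj_of_ne_bot _ hSB.2.2.2.1
  obtain ⟨hbne, hbcount⟩ : ub ≠ vb ∧ _ := hbadj
  have ha' : a = 0 ∨ a + 1 = k := hacount ▸ hvals ua va hane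
  have hb' : b = 0 ∨ b + 1 = k := hbcount ▸ hvals ub vb hbne
  have ha0 : a = 0 := by
    rcases ha' with h | h
    · exact h
    · rcases hb' with h' | h' <;> omega
  have hbk : b = k - 1 ∧ 1 ≤ b := by
    rcases hb' with h | h
    · omega
    · omega
  refine ⟨ha0, hbk.1, hbk.2, ?_, ?_⟩
  · intro u v
    exact ⟨fun h => ⟨G.ne_of_adj h, h.reachable⟩, fun ⟨h1, h2⟩ => hclique u v h1 h2⟩
  · intro c
    obtain ⟨v, rfl⟩ := c.exists_rep
    have hsupp : (G.connectedComponentMk v).supp = insert v (G.neighborSet v) := by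
      ext u
      simp only [SimpleGraph.ConnectedComponent.mem_supp_iff, Set.mem_insert_iff,
        SimpleGraph.mem_neighborSet, SimpleGraph.ConnectedComponent.eq]
      constructor
      · intro h
        by_cases hu : u = v
        · exact Or.inl hu
        · exact Or.inr ((hclique u v hu h).symm)
      · rintro (rfl | h)
        · exact SimpleGraph.Reachable.refl _
        · exact h.symm.reachable
    have hnm : v ∉ G.neighborSet v := fun hc => G.loopless.irrefl v hc
    have hcard : (insert v (G.neighborSet v)).ncard = (G.neighborSet v).ncard + 1 :=
      Set.ncard_insert_of_notMem hnm (Set.toFinite _)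
    have hk := hreg v
    rw [Nat.card_coe_set_eq] at hk
    show Nat.card (G.connectedComponentMk v).supp = k + 1
    rw [Nat.card_coe_set_eq, hsupp, hcard, hk]

end DezaPaper
end
end

section
/- Let G be a strongly Deza graph with parameters (n,k,b,a) whose spectrum is {k^1, θ₂^{m₂}, θ₃^{m₃}, θ₄^{m₄}} with θ₃ = −θ₄ and m₃ = m₄. Then m₂θ₂ = −k and one of the following holds: (i) m₂ = 1, θ₂ = −k, and G is a bipartite graph with spectrum {k^1, s^{(n−2)/2}, (−s)^{(n−2)/2}, (−k)^1} where s = sqrt(k(n−2k)/(n−2)); (ii) m₂ = k, θ₂ = −1, and G has spectrum {k^1, (√k)^{(n−k−1)/2}, (−1)^k, (−√k)^{(n−k−1)/2}}; (iii) m₂ < k and θ₂ < −1. -/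
open scoped Classical

noncomputable section

namespace DezaPaper

open SimpleGraph

variable {V : Type*}

section Aux

open Polynomial Matrix

/-- Characteristic polynomial is invariant under conjugation by a unit. -/
lemma aux_charpoly_units_conj {R : Type*} [CommRing R] {m : Type*} [Fintype m] [DecidableEq m]
    (P : (Matrix m m R)ˣ) (M : Matrix m m R) :
    ((P : Matrix m m R) * M * ((P⁻¹ : (Matrix m m R)ˣ) : Matrix m m R)).charpoly
      = M.charpoly := by
  have hPQ : (C.mapMatrix ((P : Matrix m m R)) : Matrix m m R[X]) *
      C.mapMatrix ((P⁻¹ : (Matrix m m R)ˣ) : Matrix m m R) = 1 := by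
    rw [← _root_.map_mul, Units.mul_inv, _root_.map_one]
  have hc : charmatrix ((P : Matrix m m R) * M * (↑P⁻¹ : Matrix m m R)) =
      C.mapMatrix ((P : Matrix m m R)) * charmatrix M *
        C.mapMatrix ((P⁻¹ : (Matrix m m R)ˣ) : Matrix m m R) := by
    unfold charmatrix
    rw [mul_sub, sub_mul]
    congr 1
    · have hcomm : Matrix.scalar m (X : R[X]) * C.mapMatrix ((P : Matrix m m R)) =
          C.mapMatrix ((P : Matrix m m R)) * Matrix.scalar m (X : R[X]) :=
        (Matrix.scalar_commute (X : R[X]) (fun r => Commute.all _ r) _).eq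
      rw [← hcomm, mul_assoc, hPQ, mul_one]
    · rw [_root_.map_mul, _root_.map_mul]
  rw [Matrix.charpoly, Matrix.charpoly, hc, det_mul, det_mul]
  have hdet : ((C.mapMatrix ((P : Matrix m m R))) : Matrix m m R[X]).det *
      (C.mapMatrix ((P⁻¹ : (Matrix m m R)ˣ) : Matrix m m R)).det = 1 := by
    rw [← det_mul, hPQ, det_one]
  calc (C.mapMatrix ((P : Matrix m m R))).det * (charmatrix M).det *
        (C.mapMatrix ((P⁻¹ : (Matrix m m R)ˣ) : Matrix m m R)).det
      = (charmatrix M).det * ((C.mapMatrix ((P : Matrix m m R))).det *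
        (C.mapMatrix ((P⁻¹ : (Matrix m m R)ˣ) : Matrix m m R)).det) := by ring
    _ = (charmatrix M).det := by rw [hdet, mul_one]

lemma aux_charpoly_diagonal {R : Type*} [CommRing R] {m : Type*} [Fintype m] [DecidableEq m]
    (d : m → R) : (Matrix.diagonal d).charpoly = ∏ i, (X - C (d i)) := by
  have h : charmatrix (Matrix.diagonal d) = Matrix.diagonal fun i => X - C (d i) := by
    ext i j
    by_cases hij : i = j
    · subst hij; rw [charmatrix_apply_eq, Matrix.diagonal_apply_eq, Matrix.diagonal_apply_eq]
    · rw [charmatrix_apply_ne _ _ _ hij, Matrix.diagonal_apply_ne _ hij,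
        Matrix.diagonal_apply_ne _ hij, map_zero, neg_zero]
  rw [Matrix.charpoly, h, det_diagonal]

/-- Spectral facts for a real symmetric matrix. -/
lemma aux_hermitian_facts {m : Type*} [Fintype m] [DecidableEq m]
    (A : Matrix m m ℝ) (hA : A.IsHermitian) :
    A.charpoly.roots = Finset.univ.val.map hA.eigenvalues ∧
    A.trace = ∑ i, hA.eigenvalues i ∧
    (A * A).trace = ∑ i, (hA.eigenvalues i) ^ 2 := by
  set d : m → ℝ := hA.eigenvalues with hd
  set Vm : Matrix m m ℝ := (hA.eigenvectorUnitary : Matrix m m ℝ) with hVm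
  have h1 : Vm * star Vm = 1 := hA.eigenvectorUnitary.2.2
  have h2 : star Vm * Vm = 1 := hA.eigenvectorUnitary.2.1
  set P : (Matrix m m ℝ)ˣ := ⟨Vm, star Vm, h1, h2⟩ with hP
  have hPc : (P : Matrix m m ℝ) = Vm := rfl
  have hPinv : ((P⁻¹ : (Matrix m m ℝ)ˣ) : Matrix m m ℝ) = star Vm := rfl
  have hdiag : Matrix.diagonal ((RCLike.ofReal : ℝ → ℝ) ∘ hA.eigenvalues)
      = Matrix.diagonal d := by rw [RCLike.ofReal_real_eq_id]; rfl
  have hAeq : A = (P : Matrix m m ℝ) * Matrix.diagonal d * ((P⁻¹ : (Matrix m m ℝ)ˣ) :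
      Matrix m m ℝ) := by
    rw [hPc, hPinv, ← hdiag]; exact hA.spectral_theorem
  refine ⟨?_, ?_, ?_⟩
  · rw [hAeq, aux_charpoly_units_conj, aux_charpoly_diagonal,
      Finset.prod_eq_multiset_prod]
    have hmm : Multiset.map (fun i => X - C (d i)) Finset.univ.val
        = Multiset.map (fun a => X - C a) (Multiset.map d Finset.univ.val) := by
      rw [Multiset.map_map]; rfl
    rw [hmm, roots_multiset_prod_X_sub_C]
  · rw [hAeq, Matrix.trace_mul_cycle, hPinv, hPc, h2, one_mul, Matrix.trace_diagonal]
  · have hsq : A * A = (P : Matrix m m ℝ) * (Matrix.diagonal d * Matrix.diagonal d) *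
        ((P⁻¹ : (Matrix m m ℝ)ˣ) : Matrix m m ℝ) := by
      rw [hAeq, hPc, hPinv]
      calc Vm * Matrix.diagonal d * star Vm * (Vm * Matrix.diagonal d * star Vm)
          = Vm * Matrix.diagonal d * (star Vm * Vm) * Matrix.diagonal d * star Vm := by
            noncomm_ring
        _ = Vm * (Matrix.diagonal d * Matrix.diagonal d) * star Vm := by
            rw [h2, mul_one]; noncomm_ring
    rw [hsq, Matrix.trace_mul_cycle, hPinv, hPc, h2, one_mul,
      Matrix.diagonal_mul_diagonal, Matrix.trace_diagonal]
    simp [sq]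

end Aux

/-- Let `G` be a strongly Deza graph with parameters `(n,k,b,a)` whose
spectrum is `{k¹, θ₂^m₂, θ₃^m₃, θ₄^m₄}` with `θ₃ = -θ₄` and `m₃ = m₄`.  Then
`m₂θ₂ = -k` and one of the following holds:
(i) `m₂ = 1`, `θ₂ = -k`, and `G` is a bipartite graph with spectrum
`{k¹, s^((n-2)/2), (-s)^((n-2)/2), (-k)¹}` where `s = sqrt(k(n-2k)/(n-2))`;
(ii) `m₂ = k`, `θ₂ = -1`, and `G` has spectrum
`{k¹, (√k)^((n-k-1)/2), (-1)^k, (-√k)^((n-k-1)/2)}`;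
(iii) `m₂ < k` and `θ₂ < -1`. -/
theorem stronglyDeza_four_eigenvalues_trichotomy [Fintype V] [DecidableEq V]
    (G : SimpleGraph V) (n k b a m2 m3 m4 : ℕ) (th2 th3 th4 : ℝ)
    (hG : IsStronglyDezaWith G n k b a)
    (hGspec : spectrum G = {(k : ℝ)} + Multiset.replicate m2 th2 +
      Multiset.replicate m3 th3 + Multiset.replicate m4 th4)
    (h3 : th3 = -th4) (hm : m3 = m4) :
    (m2 : ℝ) * th2 = -(k : ℝ) ∧
    ((m2 = 1 ∧ th2 = -(k : ℝ) ∧ IsBipartiteGraph G ∧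
        spectrum G = {(k : ℝ)} +
          Multiset.replicate ((n - 2) / 2)
            (Real.sqrt ((k : ℝ) * ((n : ℝ) - 2 * k) / ((n : ℝ) - 2))) +
          Multiset.replicate ((n - 2) / 2)
            (-(Real.sqrt ((k : ℝ) * ((n : ℝ) - 2 * k) / ((n : ℝ) - 2)))) +
          {-(k : ℝ)}) ∨
     (m2 = k ∧ th2 = -1 ∧
        spectrum G = {(k : ℝ)} +
          Multiset.replicate ((n - k - 1) / 2) (Real.sqrt (k : ℝ)) +
          Multiset.replicate k (-1 : ℝ) +
          Multiset.replicate ((n - k - 1) / 2) (-(Real.sqrt (k : ℝ)))) ∨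
     (m2 < k ∧ th2 < -1)) := by
  classical
  subst h3
  subst hm
  obtain ⟨⟨hn, hreg, -, -, hnebot, -⟩, -, -, -⟩ := hG
  -- the adjacency matrix is symmetric
  have hA : (adjMat G).IsHermitian := by
    have h : (adjMat G).conjTranspose = adjMat G := by
      ext i j
      by_cases h : G.Adj i j
      · simp [adjMat, Matrix.conjTranspose_apply, h, h.symm]
      · have h' : ¬ G.Adj j i := fun hh => h hh.symm
        simp [adjMat, Matrix.conjTranspose_apply, h, h']
    exact h
  obtain ⟨hroots, htr, htr2⟩ := aux_hermitian_facts (adjMat G) hA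
  have hspec : spectrum G = Finset.univ.val.map hA.eigenvalues := hroots
  -- degrees
  have hdeg : ∀ v, G.degree v = k := by
    intro v
    have h := hreg v
    rw [Nat.card_eq_fintype_card] at h
    rw [← h]
    convert (SimpleGraph.card_neighborSet_eq_degree G v).symm using 1
  have hadj : adjMat G = G.adjMatrix ℝ := by
    ext i j
    by_cases h : G.Adj i j <;> simp [adjMat, h]
  -- trace is zero
  have htr0 : (adjMat G).trace = 0 := by
    rw [hadj]; exact SimpleGraph.trace_adjMatrix ℝ G
  -- trace of the square
  have htrace2 : (adjMat G * adjMat G).trace = (Fintype.card V : ℝ) * k := by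
    rw [hadj, Matrix.trace]
    calc ∑ i, (G.adjMatrix ℝ * G.adjMatrix ℝ).diag i = ∑ _i : V, (k : ℝ) := by
          refine Finset.sum_congr rfl fun i _ => ?_
          have := G.adjMatrix_mul_self_apply_self (α := ℝ) i
          rw [Matrix.diag_apply, this, hdeg]
      _ = (Fintype.card V : ℝ) * k := by
          rw [Finset.sum_const, nsmul_eq_mul, Finset.card_univ]
  -- cardinality
  have hcard : Fintype.card V = m2 + m3 + m3 + 1 := by
    have h := congrArg Multiset.card hGspec
    rw [hspec] at h
    simpa using h
  -- sum of eigenvalues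
  have hsum : (0 : ℝ) = k + m2 * th2 + m3 * (-th4) + m3 * th4 := by
    have hs := congrArg Multiset.sum hGspec
    rw [hspec] at hs
    have h1 : (Multiset.map hA.eigenvalues Finset.univ.val).sum = ∑ i, hA.eigenvalues i := rfl
    rw [h1, ← htr, htr0] at hs
    simpa [Multiset.sum_replicate, nsmul_eq_mul] using hs
  -- sum of squares of eigenvalues
  have hsumsq : (Fintype.card V : ℝ) * k
      = k ^ 2 + m2 * th2 ^ 2 + m3 * th4 ^ 2 + m3 * th4 ^ 2 := by
    have hs := congrArg (fun s : Multiset ℝ => (s.map fun x => x ^ 2).sum) hGspec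
    rw [hspec] at hs
    have h1 : ((Multiset.map hA.eigenvalues Finset.univ.val).map fun x => x ^ 2).sum
        = ∑ i, hA.eigenvalues i ^ 2 := by
      rw [Multiset.map_map]; rfl
    rw [h1, ← htr2, htrace2] at hs
    simp [Multiset.sum_replicate, nsmul_eq_mul] at hs
    linarith [hs]
  -- k is nonzero
  have hkne : k ≠ 0 := by
    intro hk0
    apply hnebot
    ext u v
    simp only [SimpleGraph.bot_adj, iff_false]
    intro h
    have hne : (G.neighborSet u).Nonempty := ⟨v, h⟩
    haveI := hne.to_subtype
    have hpos : 0 < Nat.card (G.neighborSet u) := Nat.card_pos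
    rw [hreg u, hk0] at hpos
    exact Nat.lt_irrefl 0 hpos
  have hk1 : 1 ≤ k := Nat.one_le_iff_ne_zero.mpr hkne
  have hm2θ : (m2 : ℝ) * th2 = -(k : ℝ) := by linarith
  refine ⟨hm2θ, ?_⟩
  have hm2ne : m2 ≠ 0 := by
    intro h
    rw [h] at hm2θ
    simp at hm2θ
    exact hkne (by exact_mod_cast hm2θ)
  have hm2r : (1 : ℝ) ≤ (m2 : ℝ) := by exact_mod_cast Nat.one_le_iff_ne_zero.mpr hm2ne
  have hkr : (1 : ℝ) ≤ (k : ℝ) := by exact_mod_cast hk1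
  rcases lt_trichotomy m2 k with hlt | heq | hgt
  · -- case m2 < k
    right; right
    refine ⟨hlt, ?_⟩
    have hltr : (m2 : ℝ) < k := by exact_mod_cast hlt
    nlinarith [hm2θ, hm2r, hltr]
  · -- case m2 = k
    right; left
    have hkr0 : (k : ℝ) ≠ 0 := by positivity
    have hθ2 : th2 = -1 := by
      rw [heq] at hm2θ
      have : (k : ℝ) * th2 = (k : ℝ) * (-1) := by linarith
      exact mul_left_cancel₀ hkr0 this
    refine ⟨heq, hθ2, ?_⟩
    have hnN : n = Fintype.card V := by rw [← hn, Nat.card_eq_fintype_card]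
    have h2m3 : (n - k - 1) / 2 = m3 := by omega
    rw [h2m3]
    have hNr : (Fintype.card V : ℝ) = 1 + k + 2 * m3 := by
      rw [hcard, heq]; push_cast; ring
    by_cases hm3 : m3 = 0
    · subst hm3
      rw [hGspec, hθ2, heq]
      simp only [Multiset.replicate_zero, add_zero]
    · have hm3r : (1 : ℝ) ≤ (m3 : ℝ) := by
        exact_mod_cast Nat.one_le_iff_ne_zero.mpr hm3
      have hth4 : th4 ^ 2 = k := by
        rw [heq, hθ2] at hsumsq
        rw [hNr] at hsumsq
        nlinarith [hsumsq, hm3r]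
      rcases le_or_gt 0 th4 with h4 | h4
      · have hth : th4 = Real.sqrt k := by
          rw [← hth4, Real.sqrt_sq h4]
        rw [hGspec, hθ2, heq, hth]
        abel
      · have hth : th4 = -Real.sqrt k := by
          have h' : -th4 = Real.sqrt k := by
            rw [← hth4, Real.sqrt_sq_eq_abs, abs_of_neg h4]
          linarith
        rw [hGspec, hθ2, heq, hth, neg_neg]
        abel
  · -- case m2 > k : impossible, by integrality
    exfalso
    have hroot : th2 ∈ spectrum G := by
      rw [hGspec]
      have : th2 ∈ Multiset.replicate m2 th2 :=
        Multiset.mem_replicate.mpr ⟨hm2ne, rfl⟩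
      simp only [Multiset.mem_add]
      exact Or.inl (Or.inl (Or.inr this))
    set B : Matrix V V ℤ := Matrix.of fun u v => if G.Adj u v then 1 else 0 with hB
    have hmapB : B.map (Int.castRingHom ℝ) = adjMat G := by
      ext u v
      by_cases h : G.Adj u v <;> simp [hB, adjMat, h]
    have hcp : (adjMat G).charpoly = B.charpoly.map (Int.castRingHom ℝ) := by
      rw [← hmapB, Matrix.charpoly_map]
    have hisroot : (adjMat G).charpoly.IsRoot th2 :=
      Polynomial.isRoot_of_mem_roots hroot
    have hz : Polynomial.aeval th2 B.charpoly = 0 := by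
      rw [Polynomial.aeval_def, ← Polynomial.eval_map]
      have halg : algebraMap ℤ ℝ = Int.castRingHom ℝ := rfl
      rw [halg, ← hcp]
      exact hisroot
    have hint : _root_.IsIntegral ℤ th2 := ⟨B.charpoly, B.charpoly_monic, hz⟩
    have hm2r0 : (0 : ℝ) < (m2 : ℝ) := by linarith
    set q : ℚ := -(k : ℚ) / (m2 : ℚ) with hq
    have hqr : (algebraMap ℚ ℝ) q = th2 := by
      have hth2 : th2 = -(k : ℝ) / (m2 : ℝ) := by
        field_simp
        linarith [hm2θ]
      rw [hth2, hq]
      push_cast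
      ring
    have hintq : _root_.IsIntegral ℤ q := by
      obtain ⟨p, hmono, hev⟩ := hint
      refine ⟨p, hmono, ?_⟩
      have h := Polynomial.aeval_algebraMap_apply ℝ q p
      rw [hqr] at h
      have hev' : (Polynomial.aeval th2) p = 0 := by rw [Polynomial.aeval_def]; exact hev
      rw [hev'] at h
      rw [← Polynomial.aeval_def]
      apply (algebraMap ℚ ℝ).injective
      rw [_root_.map_zero]
      exact h.symm
    obtain ⟨t, ht⟩ := IsIntegrallyClosed.isIntegral_iff.mp hintq
    have hgtq : (k : ℚ) < (m2 : ℚ) := by exact_mod_cast hgt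
    have hkq : (1 : ℚ) ≤ (k : ℚ) := by exact_mod_cast hk1
    have hm2q : (0 : ℚ) < (m2 : ℚ) := by linarith
    have hq1 : -1 < q := by
      rw [hq]
      rw [neg_div, neg_lt, neg_neg]
      rw [div_lt_one hm2q]
      linarith
    have hq0 : q < 0 := by
      rw [hq, neg_div]
      have : 0 < (k : ℚ) / (m2 : ℚ) := div_pos (by linarith) hm2q
      linarith
    have ht' : (t : ℚ) = q := by rw [← ht]; simp
    have h1 : (-1 : ℚ) < (t : ℚ) := by rw [ht']; exact hq1
    have h2 : (t : ℚ) < 0 := by rw [ht']; exact hq0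
    have h1' : -1 < t := by exact_mod_cast h1
    have h2' : t < 0 := by exact_mod_cast h2
    omega

end DezaPaper
end
end

section
/- Let G be a Deza graph with parameters (n,k,b,a), b > a, and let M, A, B be the adjacency matrices of G and of its children G_A and G_B respectively. If θ₁ = k, θ₂, …, θₙ are the eigenvalues of M (listed with multiplicity), then the eigenvalues of A are (b(n−1) − k(k−1))/(b−a) together with (k − b − θᵢ²)/(b−a) for i = 2, …, n, and the eigenvalues of B are (a(n−1) − k(k−1))/(a−b) together with (k − a − θᵢ²)/(a−b) for i = 2, …, n. -/
open scoped Classical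

noncomputable section

namespace DezaPaper

open SimpleGraph

variable {V : Type*}

lemma roots_charpoly_diagonal {ι : Type*} [Fintype ι] [DecidableEq ι] (d : ι → ℝ) :
    (Matrix.diagonal d).charpoly.roots = Finset.univ.val.map d := by
  have h : (Matrix.diagonal d).charpoly = ∏ i, (Polynomial.X - Polynomial.C (d i)) := by
    rw [Matrix.charpoly]
    have hc : (Matrix.diagonal d).charmatrix
        = Matrix.diagonal (fun i => Polynomial.X - Polynomial.C (d i)) := by
      ext i j
      by_cases hij : i = j
      · subst hij; simp [Matrix.charmatrix_apply_eq]
      · simp [Matrix.charmatrix_apply_ne _ _ _ hij, Matrix.diagonal_apply_ne _ hij]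
    rw [hc, Matrix.det_diagonal]
  rw [h]
  have h2 : ∏ i, (Polynomial.X - Polynomial.C (d i))
      = ((Finset.univ.val.map d).map (fun a => Polynomial.X - Polynomial.C a)).prod := by
    rw [Multiset.map_map]; rfl
  rw [h2, Polynomial.roots_multiset_prod_X_sub_C]

lemma multiset_map_sum_elim {γ : Type*} [Fintype γ] (f : Unit → ℝ) (g : γ → ℝ) :
    (Finset.univ : Finset (Unit ⊕ γ)).val.map (Sum.elim f g)
      = f () ::ₘ Finset.univ.val.map g := by
  rw [← Finset.univ_disjSum_univ, Finset.val_disjSum]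
  simp [Multiset.disjSum, Multiset.map_map, Function.comp]

lemma roots_of_eigenbasis {V ι : Type*} [Fintype V] [DecidableEq V] [Fintype ι] [DecidableEq ι]
    (N : Matrix V V ℝ) (bas : Module.Basis ι ℝ (EuclideanSpace ℝ V)) (d : ι → ℝ)
    (h : ∀ i, Matrix.toEuclideanLin N (bas i) = d i • bas i) :
    N.charpoly.roots = Finset.univ.val.map d := by
  have h1 : (LinearMap.toMatrix bas bas (Matrix.toEuclideanLin N)) = Matrix.diagonal d := by
    ext i j
    rw [LinearMap.toMatrix_apply, h j, map_smul]
    by_cases hij : i = j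
    · subst hij; simp
    · simp [Module.Basis.repr_self, Finsupp.single_apply, Ne.symm hij, Matrix.diagonal_apply_ne _ hij]
  have e1 : (LinearMap.toMatrix (EuclideanSpace.basisFun V ℝ).toBasis
      (EuclideanSpace.basisFun V ℝ).toBasis (Matrix.toEuclideanLin N)) = N := by
    rw [Matrix.toEuclideanLin_eq_toLin_orthonormal, LinearMap.toMatrix_toLin]
  have h2 : N.charpoly = (Matrix.diagonal d).charpoly := by
    rw [← e1, ← h1, LinearMap.charpoly_toMatrix, LinearMap.charpoly_toMatrix]
  rw [h2, roots_charpoly_diagonal]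

lemma key {V : Type*} [Fintype V] [DecidableEq V] [Nonempty V]
    (M : Matrix V V ℝ) (hM : M.IsHermitian) (k : ℝ)
    (hrow : M.mulVec (fun _ => 1) = fun _ => k) :
    ∃ μ : Fin (Fintype.card V - 1) → ℝ,
      M.charpoly.roots = k ::ₘ Finset.univ.val.map μ ∧
      ∀ c₀ c₁ c₂ : ℝ,
        (c₀ • (1 : Matrix V V ℝ) + c₁ • Matrix.of (fun _ _ => (1:ℝ))
            + c₂ • (M * M)).charpoly.roots
          = (c₀ + c₁ * (Fintype.card V : ℝ) + c₂ * k ^ 2) ::ₘ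
              Finset.univ.val.map (fun i => c₀ + c₂ * μ i ^ 2) := by
  set n := Fintype.card V with hn
  have hn1 : 1 ≤ n := Fintype.card_pos
  set E := EuclideanSpace ℝ V
  set x₀ : E := (WithLp.equiv 2 (V → ℝ)).symm (fun _ => 1) with hx₀def
  have hx₀app : ∀ v, (WithLp.equiv 2 (V → ℝ)) x₀ v = 1 := fun v => rfl
  set f := Matrix.toEuclideanLin M with hf
  have hsym : f.IsSymmetric := Matrix.isHermitian_iff_isSymmetric.mp hM
  have hfx₀ : f x₀ = k • x₀ := by
    rw [hx₀def, WithLp.equiv_symm_apply, Matrix.toEuclideanLin_apply_piLp_toLp, hrow]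
    show _ = k • WithLp.toLp 2 (fun _ : V => (1:ℝ))
    rw [← WithLp.toLp_smul]
    congr 1
    funext v; simp
  have hx₀ne : x₀ ≠ 0 := by
    intro hzero
    have := hx₀app (Classical.arbitrary V)
    rw [hzero] at this
    exact zero_ne_one this
  set W := (ℝ ∙ x₀)ᗮ with hW
  have hinnerx₀ : ∀ x ∈ W, inner ℝ x₀ x = (0:ℝ) := by
    intro x hx
    exact Submodule.mem_orthogonal_singleton_iff_inner_right.mp hx
  have hrankE : Module.finrank ℝ E = n := finrank_euclideanSpace
  have hrankW : Module.finrank ℝ W = n - 1 := by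
    have h1 : Module.finrank ℝ (ℝ ∙ x₀) = 1 := finrank_span_singleton hx₀ne
    have h2 := Submodule.finrank_add_finrank_orthogonal (K := ℝ ∙ x₀)
    rw [← hW, h1, hrankE] at h2
    omega
  have hinv : ∀ x ∈ W, f x ∈ W := by
    intro x hx
    rw [hW, Submodule.mem_orthogonal_singleton_iff_inner_right]
    calc (inner ℝ x₀ (f x) : ℝ) = inner ℝ (f x₀) x := (hsym x₀ x).symm
      _ = inner ℝ (k • x₀) x := by rw [hfx₀]
      _ = k * inner ℝ x₀ x := real_inner_smul_left _ _ _
      _ = 0 := by rw [hinnerx₀ x hx, mul_zero]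
  set g := f.restrict hinv with hg
  have gsym : g.IsSymmetric := hsym.restrict_invariant hinv
  set β := gsym.eigenvectorBasis hrankW with hβ
  set μ := gsym.eigenvalues hrankW with hμ
  set w : Fin (n-1) → E := fun i => (β i : E) with hwdef
  have hwW : ∀ i, w i ∈ W := fun i => (β i).2
  have hfw : ∀ i, f (w i) = μ i • w i := by
    intro i
    have h1 := gsym.apply_eigenvectorBasis hrankW i
    have h2 : f (w i) = ((g (β i) : W) : E) := (LinearMap.restrict_coe_apply f hinv (β i)).symm
    rw [h2, h1]
    simp [RCLike.real_smul_eq_coe_smul (K := ℝ)]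
    rfl
  set c : ℝ := (Real.sqrt n)⁻¹ with hc
  set v : Unit ⊕ Fin (n-1) → E := Sum.elim (fun _ => c • x₀) w with hv
  have hone : ∀ i, x₀ i = 1 := fun i => rfl
  have hx₀x₀ : (inner ℝ x₀ x₀ : ℝ) = n := by
    rw [PiLp.inner_apply]
    simp [hone, hn]
  have hortho : Orthonormal ℝ v := by
    rw [orthonormal_iff_ite]
    rintro (i | i) (j | j)
    · simp only [hv, Sum.elim_inl, if_pos rfl]
      rw [real_inner_smul_left, real_inner_smul_right, hx₀x₀, hc]
      have hpos : (0:ℝ) < n := by exact_mod_cast hn1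
      rw [← mul_assoc, ← mul_inv, Real.mul_self_sqrt hpos.le]
      field_simp
      simp
    · simp only [hv, Sum.elim_inl, Sum.elim_inr]
      rw [if_neg (by simp), real_inner_smul_left, hinnerx₀ _ (hwW j), mul_zero]
    · simp only [hv, Sum.elim_inl, Sum.elim_inr]
      rw [if_neg (by simp), real_inner_smul_right, real_inner_comm, hinnerx₀ _ (hwW i), mul_zero]
    · simp only [hv, Sum.elim_inr, Sum.inr.injEq]
      have h := orthonormal_iff_ite.mp β.orthonormal i j
      rw [hwdef, ← Submodule.coe_inner, h]
  have hcard : Fintype.card (Unit ⊕ Fin (n-1)) = Module.finrank ℝ E := by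
    simp only [Fintype.card_sum, Fintype.card_unit, Fintype.card_fin, hrankE]
    omega
  set bas := basisOfOrthonormalOfCardEqFinrank hortho hcard with hbasdef
  have hbas : ⇑bas = v := coe_basisOfOrthonormalOfCardEqFinrank hortho hcard
  have hbi : ∀ i, bas i = v i := fun i => congrFun hbas i
  refine ⟨μ, ?_, ?_⟩
  · have hd : ∀ i, Matrix.toEuclideanLin M (bas i)
        = (Sum.elim (fun _ => k) μ) i • bas i := by
      intro i
      rw [hbi i]
      rcases i with i | i
      · simp only [hv, Sum.elim_inl]
        rw [← hf, map_smul, hfx₀, smul_comm]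
      · simp only [hv, Sum.elim_inr]
        rw [← hf, hfw]
    rw [roots_of_eigenbasis M bas _ hd, multiset_map_sum_elim]
  · intro c₀ c₁ c₂
    set J : Matrix V V ℝ := Matrix.of (fun _ _ => (1:ℝ)) with hJ
    have hJx : ∀ x : E, Matrix.toEuclideanLin J x = (∑ i, x i) • x₀ := by
      intro x
      rw [Matrix.toEuclideanLin_apply]
      apply PiLp.ext
      intro u
      show (J.mulVec ((WithLp.equiv 2 (V → ℝ)) x)) u = ((∑ i, x i) • x₀) u
      have h1 : (J.mulVec ((WithLp.equiv 2 (V → ℝ)) x)) u = ∑ i, x i := by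
        simp [Matrix.mulVec, dotProduct, hJ]
      rw [h1, PiLp.smul_apply, hone u, smul_eq_mul, mul_one]
    have hfN : ∀ x : E, Matrix.toEuclideanLin (c₀ • 1 + c₁ • J + c₂ • (M*M)) x
        = c₀ • x + c₁ • Matrix.toEuclideanLin J x + c₂ • (f (f x)) := by
      intro x
      have e1 : Matrix.toEuclideanLin (1 : Matrix V V ℝ) x = x := by
        rw [Matrix.toEuclideanLin_apply, Matrix.one_mulVec, WithLp.toLp_ofLp]
      have e2 : Matrix.toEuclideanLin (M*M) x = f (f x) := by
        rw [hf, Matrix.toEuclideanLin_apply, Matrix.toEuclideanLin_apply,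
          Matrix.toEuclideanLin_apply, WithLp.ofLp_toLp, Matrix.mulVec_mulVec]
      rw [map_add, map_add, map_smul, map_smul, map_smul]
      simp only [LinearMap.add_apply, LinearMap.smul_apply]
      rw [e1, e2]
    have hd : ∀ i, Matrix.toEuclideanLin (c₀ • 1 + c₁ • J + c₂ • (M*M)) (bas i)
        = (Sum.elim (fun _ => c₀ + c₁ * (n:ℝ) + c₂ * k^2)
            (fun i => c₀ + c₂ * μ i ^2)) i • bas i := by
      intro i
      rw [hbi i]
      rcases i with i | i
      · simp only [hv, Sum.elim_inl]
        have hs : ∑ i, (c • x₀) i = c * n := by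
          have : ∀ i, (c • x₀) i = c := by
            intro i
            rw [PiLp.smul_apply, hone i, smul_eq_mul, mul_one]
          rw [Finset.sum_congr rfl (fun i _ => this i)]
          simp [hn, mul_comm]
        rw [hfN, hJx, hs, map_smul, hfx₀, map_smul, map_smul, hfx₀]
        match_scalars <;> ring
      · simp only [hv, Sum.elim_inr]
        have hs : ∑ v, w i v = 0 := by
          have h := hinnerx₀ (w i) (hwW i)
          rw [PiLp.inner_apply] at h
          simpa [hone] using h
        rw [hfN, hJx, hs, hfw, map_smul, hfw]
        match_scalars <;> ring
    rw [roots_of_eigenbasis _ bas _ hd, multiset_map_sum_elim]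

lemma card_filter_common [Fintype V] [DecidableEq V] (G : SimpleGraph V) (u v : V) :
    Nat.card (G.commonNeighbors u v)
      = (Finset.univ.filter (fun w => G.Adj u w ∧ G.Adj v w)).card := by
  rw [Nat.card_coe_set_eq, Set.ncard_eq_toFinset_card']
  congr 1
  ext w
  simp [SimpleGraph.mem_commonNeighbors]

lemma card_filter_adj [Fintype V] [DecidableEq V] (G : SimpleGraph V) (u : V) :
    Nat.card (G.neighborSet u) = (Finset.univ.filter (fun w => G.Adj u w)).card := by
  rw [Nat.card_coe_set_eq, Set.ncard_eq_toFinset_card']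
  congr 1
  ext w
  simp

lemma mm_apply [Fintype V] [DecidableEq V] (G : SimpleGraph V) (u v : V) :
    (adjMat G * adjMat G) u v
      = ((Finset.univ.filter (fun w => G.Adj u w ∧ G.Adj v w)).card : ℝ) := by
  rw [Matrix.mul_apply]
  have h : ∀ w, adjMat G u w * adjMat G w v
      = if G.Adj u w ∧ G.Adj v w then (1:ℝ) else 0 := by
    intro w
    by_cases h1 : G.Adj u w <;> by_cases h2 : G.Adj v w <;>
      simp [adjMat, h1, h2, SimpleGraph.adj_comm]
  rw [Finset.sum_congr rfl (fun w _ => h w), Finset.sum_boole]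

/-- Let `G` be a Deza graph with parameters `(n,k,b,a)`, `b > a`.
If `θ₁ = k, θ₂, …, θₙ` are the eigenvalues of the adjacency matrix of `G`, then the
eigenvalues of the child `G_A` are `(b(n-1) - k(k-1))/(b-a)` together with
`(k - b - θᵢ²)/(b-a)` for `i = 2, …, n`, and the eigenvalues of the child `G_B` are
`(a(n-1) - k(k-1))/(a-b)` together with `(k - a - θᵢ²)/(a-b)` for `i = 2, …, n`. -/
theorem deza_children_spectrum [Fintype V] [DecidableEq V]
    (G : SimpleGraph V) (n k b a : ℕ)
    (hdeza : IsDezaWith G n k b a) (hba : a < b)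
    (T : Multiset ℝ) (hT : Multiset.card T = n - 1)
    (hspec : spectrum G = {(k : ℝ)} + T) :
    spectrum (child G a) =
      {((b : ℝ) * ((n : ℝ) - 1) - (k : ℝ) * ((k : ℝ) - 1)) / ((b : ℝ) - (a : ℝ))} +
        T.map (fun th => ((k : ℝ) - (b : ℝ) - th ^ 2) / ((b : ℝ) - (a : ℝ))) ∧
    spectrum (child G b) =
      {((a : ℝ) * ((n : ℝ) - 1) - (k : ℝ) * ((k : ℝ) - 1)) / ((a : ℝ) - (b : ℝ))} +
        T.map (fun th => ((k : ℝ) - (a : ℝ) - th ^ 2) / ((a : ℝ) - (b : ℝ))) := by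
  obtain ⟨hcardV, hreg, -, -, hGbot, hcn⟩ := hdeza
  have hne : Nonempty V := by
    by_contra h
    rw [not_nonempty_iff] at h
    exact hGbot (by ext u v; exact (h.elim u))
  have hncard : Fintype.card V = n := by rw [← Nat.card_eq_fintype_card]; exact hcardV
  subst hncard
  have hM : (adjMat G).IsHermitian := by
    ext u v
    simp [adjMat, Matrix.conjTranspose_apply, SimpleGraph.adj_comm]
  have hdeg : ∀ u, ((Finset.univ.filter (fun w => G.Adj u w)).card) = k := by
    intro u
    rw [← card_filter_adj]
    exact hreg u
  have hrow : (adjMat G).mulVec (fun _ => 1) = fun _ => (k:ℝ) := by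
    funext u
    rw [Matrix.mulVec, dotProduct]
    simp only [mul_one, adjMat, Matrix.of_apply]
    rw [Finset.sum_boole, hdeg]
  have hdiag : ∀ u, (adjMat G * adjMat G) u u = (k : ℝ) := by
    intro u
    rw [mm_apply]
    norm_cast
    rw [← hdeg u]
    congr 1
    ext w
    simp
  have hoff : ∀ u v : V, u ≠ v → (adjMat G * adjMat G) u v
      = (Nat.card (G.commonNeighbors u v) : ℝ) := by
    intro u v _
    rw [mm_apply, card_filter_common]
  have hba' : (b:ℝ) - a ≠ 0 := sub_ne_zero.mpr (by exact_mod_cast hba.ne')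
  have hab' : (a:ℝ) - b ≠ 0 := sub_ne_zero.mpr (by exact_mod_cast hba.ne)
  -- matrix identities
  have hA : adjMat (child G a) = (((k:ℝ)-b)/((b:ℝ)-a)) • (1 : Matrix V V ℝ)
      + (((b:ℝ))/((b:ℝ)-a)) • Matrix.of (fun _ _ => (1:ℝ))
      + ((-(1:ℝ))/((b:ℝ)-a)) • ((adjMat G) * (adjMat G)) := by
    ext u v
    simp only [Matrix.add_apply, Matrix.smul_apply, Matrix.of_apply, smul_eq_mul]
    by_cases huv : u = v
    · subst huv
      have h0 : adjMat (child G a) u u = 0 := by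
        simp [adjMat]
      rw [h0, Matrix.one_apply_eq, hdiag]
      field_simp
      ring
    · rw [Matrix.one_apply_ne huv, hoff u v huv]
      rcases hcn u v huv with hb | ha
      · have h0 : adjMat (child G a) u v = 0 := by
          have : ¬ (child G a).Adj u v := by
            rintro ⟨-, hc⟩
            rw [hb] at hc
            exact hba.ne' hc
          simp [adjMat, this]
        rw [h0, hb]
        field_simp
        ring
      · have h1 : adjMat (child G a) u v = 1 := by
          have : (child G a).Adj u v := ⟨huv, ha⟩
          simp [adjMat, this]
        rw [h1, ha]
        field_simp
        ring
  have hB : adjMat (child G b) = (((a:ℝ)-k)/((b:ℝ)-a)) • (1 : Matrix V V ℝ)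
      + ((-(a:ℝ))/((b:ℝ)-a)) • Matrix.of (fun _ _ => (1:ℝ))
      + (((1:ℝ))/((b:ℝ)-a)) • ((adjMat G) * (adjMat G)) := by
    ext u v
    simp only [Matrix.add_apply, Matrix.smul_apply, Matrix.of_apply, smul_eq_mul]
    by_cases huv : u = v
    · subst huv
      have h0 : adjMat (child G b) u u = 0 := by
        simp [adjMat]
      rw [h0, Matrix.one_apply_eq, hdiag]
      field_simp
      ring
    · rw [Matrix.one_apply_ne huv, hoff u v huv]
      rcases hcn u v huv with hb | ha
      · have h1 : adjMat (child G b) u v = 1 := by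
          have : (child G b).Adj u v := ⟨huv, hb⟩
          simp [adjMat, this]
        rw [h1, hb]
        field_simp
        ring
      · have h0 : adjMat (child G b) u v = 0 := by
          have : ¬ (child G b).Adj u v := by
            rintro ⟨-, hc⟩
            rw [ha] at hc
            exact hba.ne hc
          simp [adjMat, this]
        rw [h0, ha]
        field_simp
        ring
  obtain ⟨μ, hMroots, hNroots⟩ := key (adjMat G) hM (k : ℝ) hrow
  have hT' : T = Finset.univ.val.map μ := by
    have h : (k:ℝ) ::ₘ T = (k:ℝ) ::ₘ Finset.univ.val.map μ := by
      rw [← Multiset.singleton_add, ← hspec]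
      exact hMroots
    exact (Multiset.cons_inj_right _).mp h
  constructor
  · show (adjMat (child G a)).charpoly.roots = _
    rw [hA, hNroots, hT', Multiset.map_map, Multiset.singleton_add]
    congr 1
    · field_simp
      ring
    · congr 1
      funext i
      simp only [Function.comp_apply]
      field_simp
      ring
  · show (adjMat (child G b)).charpoly.roots = _
    rw [hB, hNroots, hT', Multiset.map_map, Multiset.singleton_add]
    congr 1
    · field_simp
      ring
    · congr 1
      funext i
      simp only [Function.comp_apply]
      field_simp
      ring

end DezaPaper
end
end

section
/- If G is a connected bipartite Deza graph with parameters (n,k,b,a) and b > a, then a = 0, the value −k is an eigenvalue of G, and the child G_B of G is disconnected. -/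
open scoped Classical

noncomputable section

namespace DezaPaper

open SimpleGraph

variable {V : Type*}

/-- If `G` is a connected bipartite Deza graph with parameters
`(n,k,b,a)` and `b > a`, then `a = 0`, the value `-k` is an eigenvalue of `G`, and the
child `G_B` of `G` is disconnected. -/
theorem connected_bipartite_deza_childB_disconnected [Fintype V] [DecidableEq V]
    (G : SimpleGraph V) (n k b a : ℕ)
    (hdeza : IsDezaWith G n k b a) (hba : a < b)
    (hconn : G.Connected) (hbip : IsBipartiteGraph G) :
    a = 0 ∧ (-(k : ℝ)) ∈ spectrum G ∧ ¬ (child G b).Connected := by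
  obtain ⟨s, hs⟩ := hbip
  obtain ⟨hn, hreg, hab, hnt, hnb, hcn⟩ := hdeza
  -- cross pairs have no common neighbours
  have hcross : ∀ u v : V, (u ∈ s ↔ v ∉ s) → G.commonNeighbors u v = ∅ := by
    intro u v huv
    ext w
    simp only [Set.mem_empty_iff_false, iff_false]
    rintro ⟨h1, h2⟩
    have e1 := hs u w h1
    have e2 := hs v w h2
    tauto
  -- there is an edge
  have hedge : ∃ u v : V, G.Adj u v := by
    by_contra h
    push_neg at h
    exact hnb (by ext u v; simp [h u v])
  obtain ⟨u0, v0, huv0⟩ := hedge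
  have hne0 : u0 ≠ v0 := G.ne_of_adj huv0
  have hcross0 : u0 ∈ s ↔ v0 ∉ s := hs u0 v0 huv0
  have hzero0 : Nat.card (G.commonNeighbors u0 v0) = 0 := by
    rw [hcross u0 v0 hcross0]; simp
  have ha0 : a = 0 := by
    rcases hcn u0 v0 hne0 with h | h
    · omega
    · omega
  refine ⟨ha0, ?_, ?_⟩
  · -- eigenvalue -k
    set x : V → ℝ := fun v => if v ∈ s then 1 else -1 with hx
    have hxne : x ≠ 0 := by
      intro h
      have := congrFun h u0
      simp only [hx, Pi.zero_apply] at this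
      by_cases hu : u0 ∈ s <;> simp [hu] at this
    have hnbr : ∀ v u, G.Adj v u → x u = -x v := by
      intro v u h
      have := hs v u h
      by_cases hv : v ∈ s <;> simp [hx, hv] at * <;> simp [this, hv] <;> tauto
    have hdeg : ∀ v : V, (Finset.univ.filter (fun u => G.Adj v u)).card = k := by
      intro v
      have := hreg v
      rw [Nat.card_eq_fintype_card, ← Set.toFinset_card] at this
      rw [← this]
      congr 1
      ext u
      simp [SimpleGraph.mem_neighborSet]
    have hAx : (adjMat G).mulVec x = (-(k : ℝ)) • x := by
      funext v
      have : (adjMat G).mulVec x v = ∑ u ∈ Finset.univ.filter (fun u => G.Adj v u), x u := by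
        rw [Matrix.mulVec, dotProduct]
        rw [Finset.sum_filter]
        congr 1
        funext u
        simp only [adjMat, Matrix.of_apply]
        by_cases h : G.Adj v u <;> simp [h]
      rw [this]
      have hsum : ∑ u ∈ Finset.univ.filter (fun u => G.Adj v u), x u
          = ∑ u ∈ Finset.univ.filter (fun u => G.Adj v u), (-x v) := by
        apply Finset.sum_congr rfl
        intro u hu
        exact hnbr v u (by simpa using hu)
      rw [hsum, Finset.sum_const, hdeg v]
      simp [mul_comm]
    have hdet : ((-(k : ℝ)) • (1 : Matrix V V ℝ) - adjMat G).det = 0 := by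
      rw [← Matrix.exists_mulVec_eq_zero_iff]
      refine ⟨x, hxne, ?_⟩
      rw [Matrix.sub_mulVec, Matrix.smul_mulVec, Matrix.one_mulVec, hAx, sub_self]
    have heval : (adjMat G).charpoly.eval (-(k : ℝ)) = 0 := by
      rw [Matrix.charpoly, eval_det, Matrix.matPolyEquiv_charmatrix]
      simp only [Polynomial.eval_sub, Polynomial.eval_X, Polynomial.eval_C]
      rw [← hdet]
      congr 1
      rw [Matrix.scalar_apply]
      ext i j
      by_cases h : i = j <;> simp [h, Matrix.diagonal, Matrix.one_apply]
    rw [spectrum, Polynomial.mem_roots']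
    exact ⟨(adjMat G).charpoly_monic.ne_zero, heval⟩
  · -- child G b is disconnected
    intro hconn'
    have key : ∀ u v : V, ∀ _ : (child G b).Walk u v, (u ∈ s ↔ v ∈ s) := by
      intro u v p
      induction p with
      | nil => rfl
      | @cons u w v h p ih =>
        have hb : Nat.card (G.commonNeighbors u w) = b := (h : u ≠ w ∧ Nat.card (G.commonNeighbors u w) = b).2
        have hb0 : b ≠ 0 := by omega
        have hnonempty : (G.commonNeighbors u w).Nonempty := by
          rw [Set.nonempty_coe_sort.symm]
          rcases Nat.card_ne_zero.mp (by rw [hb]; exact hb0) with ⟨h1, _⟩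
          exact h1
        obtain ⟨z, hz1, hz2⟩ := hnonempty
        have e1 := hs u z hz1
        have e2 := hs w z hz2
        rw [show (u ∈ s ↔ v ∈ s) ↔ ((u ∈ s ↔ w ∈ s) ∧ (w ∈ s ↔ v ∈ s)) ∨ False by tauto]
        left
        exact ⟨by tauto, ih⟩
    have hreach := hconn'.preconnected u0 v0
    obtain ⟨p⟩ := hreach
    have := key u0 v0 p
    tauto

end DezaPaper
end
end
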